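/- Let G0 be a connected finite simple graph with a vertex x satisfying d_{G0}(x) ∈ {1, 2}. Let P1 = u1u2⋯uk and P2 = v1v2⋯vl (k, l ≥ 1) be paths, vertex-disjoint from each other and from G0. Let G1 be the graph obtained from the disjoint union of G0, P1 and P2 by adding the edges u1x and v1x, and let G2 be obtained from G1 by deleting the edge u1x and adding the edge u1v_l. Then SO(G1) > SO(G2). -/

import Mathlib

open SimpleGraph

/-- Degree of a vertex (instance-free version). -/
noncomputable def gdeg {V : Type*} [Fintype V] (G : SimpleGraph V) (v : V) : ℕ :=
  (Set.toFinite (G.neighborSet v)).toFinset.card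

/-- Sombor index: sum over edges of sqrt(d(u)^2 + d(v)^2). -/
noncomputable def SO {V : Type*} [Fintype V] (G : SimpleGraph V) : ℝ :=
  ∑ e ∈ (Set.toFinite G.edgeSet).toFinset,
    Sym2.lift ⟨fun u v => Real.sqrt ((gdeg G u : ℝ) ^ 2 + (gdeg G v : ℝ) ^ 2),
      fun u v => by dsimp only; rw [add_comm]⟩ e

/-- Reduced Sombor index: sum over edges of sqrt((d(u)-1)^2 + (d(v)-1)^2). -/
noncomputable def SOred {V : Type*} [Fintype V] (G : SimpleGraph V) : ℝ :=
  ∑ e ∈ (Set.toFinite G.edgeSet).toFinset,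
    Sym2.lift ⟨fun u v => Real.sqrt (((gdeg G u : ℝ) - 1) ^ 2 + ((gdeg G v : ℝ) - 1) ^ 2),
      fun u v => by dsimp only; rw [add_comm]⟩ e

noncomputable def somf {V : Type*} [Fintype V] (G : SimpleGraph V) : Sym2 V → ℝ :=
  Sym2.lift ⟨fun u v => Real.sqrt ((gdeg G u : ℝ) ^ 2 + (gdeg G v : ℝ) ^ 2),
      fun u v => by dsimp only; rw [add_comm]⟩

lemma SO_eq {V : Type*} [Fintype V] (G : SimpleGraph V) :
    SO G = ∑ e ∈ (Set.toFinite G.edgeSet).toFinset, somf G e := rfl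

lemma somf_mk {V : Type*} [Fintype V] (G : SimpleGraph V) (a b : V) :
    somf G s(a, b) = Real.sqrt ((gdeg G a : ℝ) ^ 2 + (gdeg G b : ℝ) ^ 2) := rfl

lemma gdeg_eq {V : Type*} [Fintype V] (G : SimpleGraph V) (v : V) :
    gdeg G v = (G.neighborSet v).ncard := (Set.ncard_eq_toFinset_card _ _).symm

lemma somf_le {V : Type*} [Fintype V] {G G' : SimpleGraph V} {a b : V}
    (ha : gdeg G' a ≤ gdeg G a) (hb : gdeg G' b ≤ gdeg G b) :
    somf G' s(a, b) ≤ somf G s(a, b) := by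
  rw [somf_mk, somf_mk]
  apply Real.sqrt_le_sqrt
  have ha' : (gdeg G' a : ℝ) ≤ gdeg G a := Nat.cast_le.mpr ha
  have hb' : (gdeg G' b : ℝ) ≤ gdeg G b := Nat.cast_le.mpr hb
  have h1 : (0:ℝ) ≤ gdeg G' a := Nat.cast_nonneg _
  have h2 : (0:ℝ) ≤ gdeg G' b := Nat.cast_nonneg _
  nlinarith

/-- Key accounting lemma: if `G₂`'s edge set is `G₁`'s with `eux` swapped for `euw`,
all common edges except possibly `eW` have no larger weight in `G₂`, and the
exceptional contributions satisfy a strict inequality, then `SO G₂ < SO G₁`. -/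
lemma key {V : Type*} [Fintype V] (G₁ G₂ : SimpleGraph V) (eux euw eW : Sym2 V)
    (h1 : eux ∈ G₁.edgeSet) (hW1 : eW ∈ G₁.edgeSet) (hne : eW ≠ eux)
    (heuw : euw ∉ G₁.edgeSet)
    (hE : G₂.edgeSet = insert euw (G₁.edgeSet \ {eux}))
    (hmono : ∀ e ∈ G₁.edgeSet, e ≠ eux → e ≠ eW → somf G₂ e ≤ somf G₁ e)
    (hkey : somf G₂ euw + somf G₂ eW < somf G₁ eux + somf G₁ eW) :
    SO G₂ < SO G₁ := by
  classical
  rw [SO_eq, SO_eq]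
  set T1 := (Set.toFinite G₁.edgeSet).toFinset with hT1
  have hmem : ∀ e, e ∈ T1 ↔ e ∈ G₁.edgeSet := by
    intro e; rw [hT1, Set.Finite.mem_toFinset]
  have hT2 : (Set.toFinite G₂.edgeSet).toFinset = insert euw (T1.erase eux) := by
    ext e
    rw [Set.Finite.mem_toFinset, hE]
    simp only [Set.mem_insert_iff, Set.mem_diff, Set.mem_singleton_iff,
      Finset.mem_insert, Finset.mem_erase, hmem]
    tauto
  have h1' : eux ∈ T1 := (hmem _).mpr h1
  have hW1' : eW ∈ T1.erase eux := Finset.mem_erase.mpr ⟨hne, (hmem _).mpr hW1⟩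
  have heuw' : euw ∉ T1.erase eux := fun h => heuw ((hmem _).mp (Finset.mem_of_mem_erase h))
  rw [hT2, Finset.sum_insert heuw']
  rw [← Finset.add_sum_erase _ _ h1']
  rw [← Finset.add_sum_erase _ (somf G₂) hW1', ← Finset.add_sum_erase _ (somf G₁) hW1']
  have hsum : ∑ e ∈ (T1.erase eux).erase eW, somf G₂ e ≤
      ∑ e ∈ (T1.erase eux).erase eW, somf G₁ e := by
    apply Finset.sum_le_sum
    intro e he
    have h2 := Finset.mem_erase.mp he
    have h3 := Finset.mem_erase.mp h2.2
    exact hmono e ((hmem _).mp h3.2) h3.1 h2.1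
  linarith

lemma keyineq1 (t c : ℝ) (ht0 : 0 ≤ t) (ht : t ≤ 4) (hc : 3 ≤ c) :
    Real.sqrt (t + 4) + Real.sqrt 8 < Real.sqrt (t + c ^ 2) + Real.sqrt 5 := by
  have h9 : Real.sqrt (t + 9) ≤ Real.sqrt (t + c ^ 2) := Real.sqrt_le_sqrt (by nlinarith)
  have e1 : Real.sqrt (t + 9) ^ 2 = t + 9 := Real.sq_sqrt (by linarith)
  have e2 : Real.sqrt (t + 4) ^ 2 = t + 4 := Real.sq_sqrt (by linarith)
  have n1 : 0 ≤ Real.sqrt (t + 9) := Real.sqrt_nonneg _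
  have n2 : 0 ≤ Real.sqrt (t + 4) := Real.sqrt_nonneg _
  have h8 : Real.sqrt 8 < 2.8285 := by
    rw [show (2.8285 : ℝ) = Real.sqrt (2.8285 ^ 2) from (Real.sqrt_sq (by norm_num)).symm]
    exact Real.sqrt_lt_sqrt (by norm_num) (by norm_num)
  have h5 : 2.236 < Real.sqrt 5 := by
    rw [show (2.236 : ℝ) = Real.sqrt (2.236 ^ 2) from (Real.sqrt_sq (by norm_num)).symm]
    exact Real.sqrt_lt_sqrt (by norm_num) (by norm_num)
  have hub : Real.sqrt (t + 9) ≤ 3.61 := by nlinarith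
  have hub2 : Real.sqrt (t + 4) ≤ 2.83 := by nlinarith
  have hdiff : 0.77 ≤ Real.sqrt (t + 9) - Real.sqrt (t + 4) := by nlinarith
  linarith

lemma keyineq2 (a c : ℝ) (h0a : 0 ≤ a) (hc : 3 ≤ c) :
    Real.sqrt (a ^ 2 + 4) + Real.sqrt ((c - 1) ^ 2 + 4) <
      Real.sqrt (a ^ 2 + c ^ 2) + Real.sqrt (c ^ 2 + 1) := by
  have h1 : Real.sqrt (a ^ 2 + 4) < Real.sqrt (a ^ 2 + c ^ 2) :=
    Real.sqrt_lt_sqrt (by positivity) (by nlinarith)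
  have h2 : Real.sqrt ((c - 1) ^ 2 + 4) ≤ Real.sqrt (c ^ 2 + 1) :=
    Real.sqrt_le_sqrt (by nlinarith)
  linarith

/-- Lemma 2.3 for `SO`. -/
theorem lemma23_SO {α : Type*} [Fintype α] (G₀ : SimpleGraph α)
    (hconn : G₀.Connected) (x : α)
    (hdx : gdeg G₀ x = 1 ∨ gdeg G₀ x = 2)
    (k l : ℕ) (hk : 1 ≤ k) (hl : 1 ≤ l)
    (G₁ G₂ : SimpleGraph (α ⊕ (Fin k ⊕ Fin l)))
    (hG₁ : G₁ = (G₀ ⊕g (pathGraph k ⊕g pathGraph l)) ⊔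
      fromEdgeSet {s(Sum.inr (Sum.inl ⟨0, by omega⟩), Sum.inl x),
                   s(Sum.inr (Sum.inr ⟨0, by omega⟩), Sum.inl x)})
    (hG₂ : G₂ = (G₁.deleteEdges {s(Sum.inr (Sum.inl ⟨0, by omega⟩), Sum.inl x)}) ⊔
      fromEdgeSet {s(Sum.inr (Sum.inl ⟨0, by omega⟩), Sum.inr (Sum.inr ⟨l - 1, by omega⟩))}) :
    SO G₂ < SO G₁ := by
  classical
  set U : α ⊕ (Fin k ⊕ Fin l) := Sum.inr (Sum.inl ⟨0, by omega⟩) with hU_def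
  set X : α ⊕ (Fin k ⊕ Fin l) := Sum.inl x with hX_def
  set V1 : α ⊕ (Fin k ⊕ Fin l) := Sum.inr (Sum.inr ⟨0, by omega⟩) with hV1_def
  set W : α ⊕ (Fin k ⊕ Fin l) := Sum.inr (Sum.inr ⟨l - 1, by omega⟩) with hW_def
  have hadj1 : ∀ a b : α ⊕ (Fin k ⊕ Fin l), G₁.Adj a b ↔
      ((G₀ ⊕g (pathGraph k ⊕g pathGraph l)).Adj a b ∨
        ((s(a, b) = s(U, X) ∨ s(a, b) = s(V1, X)) ∧ a ≠ b)) := by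
    intro a b
    rw [hG₁]
    simp only [sup_adj, fromEdgeSet_adj, Set.mem_insert_iff, Set.mem_singleton_iff]
  have hadj2 : ∀ a b : α ⊕ (Fin k ⊕ Fin l), G₂.Adj a b ↔
      ((G₁.Adj a b ∧ ¬ s(a, b) = s(U, X)) ∨ (s(a, b) = s(U, W) ∧ a ≠ b)) := by
    intro a b
    rw [hG₂]
    simp only [sup_adj, deleteEdges_adj, fromEdgeSet_adj, Set.mem_singleton_iff]
  clear hG₁ hG₂
  have hUW : U ≠ W := by simp [hU_def, hW_def]
  have hUX : U ≠ X := by simp [hU_def, hX_def]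
  have hWX : W ≠ X := by simp [hW_def, hX_def]
  have hV1X : V1 ≠ X := by simp [hV1_def, hX_def]
  have hUV1 : U ≠ V1 := by simp [hU_def, hV1_def]
  have hadjUX : G₁.Adj U X := by
    rw [hadj1]; exact Or.inr ⟨Or.inl rfl, hUX⟩
  have hadjV1X : G₁.Adj V1 X := by
    rw [hadj1]; exact Or.inr ⟨Or.inr rfl, hV1X⟩
  -- neighbors of U in G₁
  have hNU : ∀ w : α ⊕ (Fin k ⊕ Fin l), G₁.Adj U w →
      w = X ∨ w = Sum.inr (Sum.inl ⟨1 % k, Nat.mod_lt _ (by omega)⟩) := by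
    intro w h
    rw [hadj1] at h
    rcases h with h | ⟨h | h, hne⟩
    · rcases w with y | j | j
      · rw [hU_def] at h; simp at h
      · rw [hU_def] at h
        simp only [sum_adj, pathGraph_adj] at h
        right
        have hjk : (j : ℕ) < k := j.isLt
        rcases h with h | h
        · congr 1; congr 1
          refine Fin.ext ?_
          show (j : ℕ) = 1 % k
          rw [Nat.mod_eq_of_lt (by omega)]
          omega
        · omega
      · rw [hU_def] at h; simp at h
    · rw [Sym2.eq_iff] at h
      rcases h with ⟨-, h⟩ | ⟨h, -⟩
      · exact Or.inl h
      · exact absurd h hUX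
    · rw [Sym2.eq_iff] at h
      rcases h with ⟨h, -⟩ | ⟨h, -⟩
      · exact absurd h hUV1
      · exact absurd h hUX
  have hWnotNU : ¬ G₁.Adj U W := by
    intro h
    rcases hNU _ h with h | h
    · exact hWX h
    · rw [hW_def] at h; simp at h
  have hXmemNU : X ∈ G₁.neighborSet U := hadjUX
  -- gdeg G₂ U = gdeg G₁ U
  have hNU2 : G₂.neighborSet U = insert W (G₁.neighborSet U \ {X}) := by
    ext w
    simp only [mem_neighborSet, hadj2, Set.mem_insert_iff, Set.mem_diff,
      Set.mem_singleton_iff, Sym2.eq_iff]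
    constructor
    · rintro (⟨h, hne⟩ | ⟨h | h, -⟩)
      · right
        exact ⟨h, fun hw => hne (by tauto)⟩
      · exact Or.inl h.2
      · exact absurd h.1 hUW
    · rintro (rfl | ⟨h, hw⟩)
      · exact Or.inr ⟨by tauto, hUW⟩
      · refine Or.inl ⟨h, fun hcon => ?_⟩
        have h1 : ¬ (U = X) := hUX
        tauto
  have hUdeg : gdeg G₂ U = gdeg G₁ U := by
    rw [gdeg_eq, gdeg_eq, hNU2]
    rw [Set.ncard_insert_of_notMem (by simp [hWnotNU]) (Set.toFinite _)]
    rw [Set.ncard_diff_singleton_add_one hXmemNU (Set.toFinite _)]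
  have hUdeg2 : gdeg G₁ U ≤ 2 := by
    rw [gdeg_eq]
    have hsub : G₁.neighborSet U ⊆
        {X, Sum.inr (Sum.inl ⟨1 % k, Nat.mod_lt _ (by omega)⟩)} := by
      intro w hw
      rcases hNU w hw with h | h
      · exact Or.inl h
      · exact Or.inr h
    calc (G₁.neighborSet U).ncard ≤ _ := Set.ncard_le_ncard hsub (Set.toFinite _)
      _ ≤ 2 := by
        apply le_trans (Set.ncard_insert_le _ _)
        simp
  -- gdeg G₁ X ≥ 3
  have hXdeg3 : 3 ≤ gdeg G₁ X := by
    have hne0 : gdeg G₀ x ≠ 0 := by omega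
    rw [gdeg_eq] at hne0
    obtain ⟨y, hy⟩ := Set.nonempty_of_ncard_ne_zero hne0
    have hsub : {U, V1, Sum.inl y} ⊆ G₁.neighborSet X := by
      intro w hw
      rcases hw with rfl | rfl | rfl
      · exact hadjUX.symm
      · exact hadjV1X.symm
      · rw [mem_neighborSet, hadj1]
        left
        rw [hX_def]
        simpa using hy
    have h3 : ({U, V1, Sum.inl y} : Set (α ⊕ (Fin k ⊕ Fin l))).ncard = 3 := by
      rw [Set.ncard_insert_of_notMem (by simp [hUV1, hU_def, hV1_def]) (Set.toFinite _),
        Set.ncard_pair (by simp [hV1_def])]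
    rw [gdeg_eq]
    calc 3 = _ := h3.symm
      _ ≤ _ := Set.ncard_le_ncard hsub (Set.toFinite _)
  have hXdeg : gdeg G₂ X + 1 = gdeg G₁ X := by
    have hNX2 : G₂.neighborSet X = G₁.neighborSet X \ {U} := by
      ext w
      simp only [mem_neighborSet, hadj2, Set.mem_diff, Set.mem_singleton_iff, Sym2.eq_iff]
      constructor
      · rintro (⟨h, hne⟩ | ⟨h | h, -⟩)
        · exact ⟨h, fun hw => hne (by tauto)⟩
        · exact absurd h.1 (Ne.symm hUX)
        · exact absurd h.1 hWX.symm
      · rintro ⟨h, hw⟩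
        refine Or.inl ⟨h, fun hcon => ?_⟩
        have h1 : ¬ (X = U) := fun h2 => hUX h2.symm
        have h2 : ¬ (X = W) := fun h2 => hWX h2.symm
        tauto
    rw [gdeg_eq, gdeg_eq, hNX2]
    exact Set.ncard_diff_singleton_add_one hXmemNU.symm (Set.toFinite _)
  -- neighbor sets unchanged away from U X W
  have hNeq : ∀ v : α ⊕ (Fin k ⊕ Fin l), v ≠ U → v ≠ X → v ≠ W →
      G₂.neighborSet v = G₁.neighborSet v := by
    intro v hvU hvX hvW
    ext w
    simp only [mem_neighborSet, hadj2, Sym2.eq_iff]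
    constructor
    · rintro (⟨h, -⟩ | ⟨(⟨h1, -⟩ | ⟨h1, -⟩), -⟩)
      · exact h
      · exact absurd h1 hvU
      · exact absurd h1 hvW
    · intro h
      exact Or.inl ⟨h, by rintro (⟨h1, -⟩ | ⟨h1, -⟩); exacts [hvU h1, hvX h1]⟩
  have hle : ∀ v : α ⊕ (Fin k ⊕ Fin l), v ≠ W → gdeg G₂ v ≤ gdeg G₁ v := by
    intro v hvW
    by_cases hvU : v = U
    · subst hvU; rw [hUdeg]
    by_cases hvX : v = X
    · subst hvX; omega
    · rw [gdeg_eq, gdeg_eq, hNeq v hvU hvX hvW]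
  -- the unique neighbor of W in G₁
  set w' : α ⊕ (Fin k ⊕ Fin l) :=
    if hl1 : l = 1 then X else Sum.inr (Sum.inr ⟨l - 2, by omega⟩) with hw'_def
  have hw'U : w' ≠ U := by
    rw [hw'_def]
    split_ifs
    · exact hUX.symm
    · simp [hU_def]
  have hw'W : w' ≠ W := by
    rw [hw'_def]
    split_ifs with h
    · exact hWX.symm
    · rw [hW_def]; simp; omega
  have hNW : G₁.neighborSet W = {w'} := by
    ext w
    simp only [mem_neighborSet, Set.mem_singleton_iff, hadj1, Sym2.eq_iff]
    constructor
    · rintro (h | ⟨(⟨h1, -⟩ | ⟨h1, -⟩) | (⟨h1, h2⟩ | ⟨h1, -⟩), -⟩)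
      · rcases w with y | j | j
        · rw [hW_def] at h; simp at h
        · rw [hW_def] at h; simp at h
        · rw [hW_def] at h
          simp only [sum_adj, pathGraph_adj] at h
          have hjl : (j : ℕ) < l := j.isLt
          rcases h with h | h
          · omega
          · have hl2 : l ≠ 1 := by omega
            rw [hw'_def, dif_neg hl2]
            congr 1; congr 1
            refine Fin.ext ?_
            show (j : ℕ) = l - 2
            omega
      · exact absurd h1 (hUW.symm)
      · exact absurd h1 hWX
      · -- W = V1 and w = X, so l = 1
        have hl1 : l = 1 := by
          rw [hW_def, hV1_def] at h1
          simp at h1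
          omega
        rw [hw'_def, dif_pos hl1]
        exact h2
      · exact absurd h1 hWX
    · rintro rfl
      by_cases hl1 : l = 1
      · rw [hw'_def, dif_pos hl1]
        have hWV1 : W = V1 := by
          rw [hW_def, hV1_def]; congr 1; congr 1; exact Fin.ext (by omega)
        right
        exact ⟨Or.inr (Or.inl ⟨hWV1, rfl⟩), hWV1 ▸ hV1X⟩
      · rw [hw'_def, dif_neg hl1]
        left
        rw [hW_def]
        simp only [sum_adj, pathGraph_adj]
        right
        show l - 2 + 1 = l - 1
        omega
  have hWdeg1 : gdeg G₁ W = 1 := by rw [gdeg_eq, hNW, Set.ncard_singleton]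
  have hadjWw' : G₁.Adj W w' := by
    have : w' ∈ G₁.neighborSet W := by rw [hNW]; rfl
    exact this
  have hNW2 : G₂.neighborSet W = {U, w'} := by
    ext w
    simp only [mem_neighborSet, hadj2, Set.mem_insert_iff, Set.mem_singleton_iff, Sym2.eq_iff]
    constructor
    · rintro (⟨h, -⟩ | ⟨(⟨h1, -⟩ | ⟨-, h2⟩), -⟩)
      · right
        have : w ∈ G₁.neighborSet W := h
        rwa [hNW] at this
      · exact absurd h1 hUW.symm
      · exact Or.inl h2
    · rintro (rfl | rfl)
      · exact Or.inr ⟨by tauto, hUW.symm⟩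
      · refine Or.inl ⟨hadjWw', fun hcon => ?_⟩
        have h1 : ¬ (W = U) := fun h => hUW h.symm
        have h2 : ¬ (w' = U) := hw'U
        tauto
  have hWdeg2 : gdeg G₂ W = 2 := by
    rw [gdeg_eq, hNW2, Set.ncard_pair (Ne.symm hw'U)]
  -- edge set relation
  have heuxE : s(U, X) ∈ G₁.edgeSet := hadjUX
  have heuwE : s(U, W) ∉ G₁.edgeSet := hWnotNU
  have heWE : s(w', W) ∈ G₁.edgeSet := hadjWw'.symm
  have heWne : s(w', W) ≠ s(U, X) := by
    intro h
    rw [Sym2.eq_iff] at h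
    rcases h with ⟨h1, -⟩ | ⟨-, h2⟩
    exacts [hw'U h1, hUW h2.symm]
  have hE : G₂.edgeSet = insert s(U, W) (G₁.edgeSet \ {s(U, X)}) := by
    ext e
    induction e using Sym2.ind with
    | _ a b =>
      simp only [mem_edgeSet, hadj2, Set.mem_insert_iff, Set.mem_diff, Set.mem_singleton_iff]
      constructor
      · rintro (⟨h, hne⟩ | ⟨h, -⟩)
        · exact Or.inr ⟨h, hne⟩
        · exact Or.inl h
      · rintro (h | ⟨h, hne⟩)
        · refine Or.inr ⟨h, ?_⟩
          rw [Sym2.eq_iff] at h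
          rcases h with ⟨rfl, rfl⟩ | ⟨rfl, rfl⟩
          exacts [hUW, hUW.symm]
        · exact Or.inl ⟨h, hne⟩
  -- monotonicity on common edges
  have hmono : ∀ e ∈ G₁.edgeSet, e ≠ s(U, X) → e ≠ s(w', W) → somf G₂ e ≤ somf G₁ e := by
    intro e
    induction e using Sym2.ind with
    | _ a b =>
      intro he hne1 hne2
      have hadj : G₁.Adj a b := he
      have haW : a ≠ W := by
        rintro rfl
        have : b ∈ G₁.neighborSet W := hadj
        rw [hNW] at this
        rw [Set.mem_singleton_iff] at this
        subst this
        exact hne2 (Sym2.eq_swap)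
      have hbW : b ≠ W := by
        rintro rfl
        have : a ∈ G₁.neighborSet W := hadj.symm
        rw [hNW] at this
        rw [Set.mem_singleton_iff] at this
        subst this
        exact hne2 rfl
      exact somf_le (hle a haW) (hle b hbW)
  -- apply the key lemma
  apply key G₁ G₂ s(U, X) s(U, W) s(w', W) heuxE heWE heWne heuwE hE hmono
  -- the numeric inequality
  by_cases hl1 : l = 1
  · have hw'X : w' = X := by rw [hw'_def, dif_pos hl1]
    rw [hw'X]
    rw [somf_mk, somf_mk, somf_mk, somf_mk]
    rw [hUdeg, hWdeg2, hWdeg1]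
    have hc : (3:ℝ) ≤ (gdeg G₁ X : ℝ) := by exact_mod_cast hXdeg3
    have hcX : (gdeg G₂ X : ℝ) = (gdeg G₁ X : ℝ) - 1 := by
      have := hXdeg; push_cast [← this]; ring
    rw [hcX]
    push_cast
    have := keyineq2 (gdeg G₁ U : ℝ) (gdeg G₁ X : ℝ) (Nat.cast_nonneg _) hc
    norm_num at this ⊢
    linarith
  · -- l ≥ 2 : w' is the predecessor of W on the path, of degree 2 in both graphs
    have hl2 : 2 ≤ l := by omega
    have hw'eq : w' = Sum.inr (Sum.inr ⟨l - 2, by omega⟩) := by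
      rw [hw'_def, dif_neg hl1]
    have hw'X : w' ≠ X := by rw [hw'eq, hX_def]; simp
    -- gdeg G₁ w' = 2
    have hNw' : G₁.neighborSet w' =
        {(if l = 2 then X else Sum.inr (Sum.inr ⟨l - 3, by omega⟩)), W} := by
      ext w
      simp only [mem_neighborSet, Set.mem_insert_iff, Set.mem_singleton_iff, hadj1, Sym2.eq_iff]
      constructor
      · rintro (h | ⟨(⟨h1, -⟩ | ⟨h1, -⟩) | (⟨h1, h2⟩ | ⟨h1, -⟩), -⟩)
        · rcases w with y | j | j
          · rw [hw'eq] at h; simp at h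
          · rw [hw'eq] at h; simp at h
          · rw [hw'eq] at h
            simp only [sum_adj, pathGraph_adj] at h
            have hjl : (j : ℕ) < l := j.isLt
            rcases h with h | h
            · right; rw [hW_def]; congr 1; congr 1
              refine Fin.ext ?_
              show (j : ℕ) = l - 1
              omega
            · left
              have hl3 : ¬ l = 2 := by omega
              rw [if_neg hl3]
              congr 1; congr 1
              refine Fin.ext ?_
              show (j : ℕ) = l - 3
              omega
        · exact absurd h1 (by rw [hw'eq, hU_def]; simp)
        · exact absurd h1 hw'X
        · -- w' = V1 → l = 2, and w = X
          have hl2' : l = 2 := by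
            rw [hw'eq, hV1_def] at h1
            simp at h1
            omega
          left
          rw [if_pos hl2']
          exact h2
        · exact absurd h1 hw'X
      · rintro (rfl | rfl)
        · by_cases hl2' : l = 2
          · rw [if_pos hl2']
            have hw'V1 : w' = V1 := by
              rw [hw'eq, hV1_def]; congr 1; congr 1
              refine Fin.ext ?_
              show l - 2 = 0
              omega
            exact Or.inr ⟨Or.inr (Or.inl ⟨hw'V1, rfl⟩), hw'V1 ▸ hV1X⟩
          · rw [if_neg hl2']
            left
            rw [hw'eq]
            simp only [sum_adj, pathGraph_adj]
            right
            show l - 3 + 1 = l - 2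
            omega
        · left
          rw [hw'eq, hW_def]
          simp only [sum_adj, pathGraph_adj]
          left
          show l - 2 + 1 = l - 1
          omega
    have hw'deg1 : gdeg G₁ w' = 2 := by
      rw [gdeg_eq, hNw', Set.ncard_pair]
      split_ifs with h
      · exact hWX.symm
      · rw [hW_def]; simp; omega
    have hw'W' : w' ≠ W := hw'W
    have hw'U' : w' ≠ U := hw'U
    have hw'deg2 : gdeg G₂ w' = 2 := by
      rw [gdeg_eq, hNeq w' hw'U' hw'X hw'W', ← gdeg_eq, hw'deg1]
    rw [somf_mk, somf_mk, somf_mk, somf_mk]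
    rw [hUdeg, hWdeg2, hWdeg1, hw'deg1, hw'deg2]
    have hc : (3:ℝ) ≤ (gdeg G₁ X : ℝ) := by exact_mod_cast hXdeg3
    have ha2 : ((gdeg G₁ U : ℝ)) ^ 2 ≤ 4 := by
      have : (gdeg G₁ U : ℝ) ≤ 2 := by exact_mod_cast hUdeg2
      nlinarith [Nat.cast_nonneg (α := ℝ) (gdeg G₁ U)]
    have := keyineq1 ((gdeg G₁ U : ℝ) ^ 2) (gdeg G₁ X : ℝ) (by positivity) ha2 hc
    norm_num at this ⊢
    linarith
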